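/- Let n ∈ ℕ, β = 2n, and let (P,Q) and (P̃,Q̃) be two pairs of nonzero coprime polynomials in ℂ[X] with max(deg P, deg Q) = n = max(deg P̃, deg Q̃). Define u_{P,Q}(z) := √(2/(πβ)) · conj(P'(z)·Q(z) − P(z)·Q'(z)) / (|P(z)|² + |Q(z)|²). Then u_{P,Q}(z) = u_{P̃,Q̃}(z) for all z ∈ ℂ if and only if there exist a constant c > 0 and a constant matrix Λ ∈ SU(2) such that P̃ = c·(Λ₁₁·P + Λ₁₂·Q) and Q̃ = c·(Λ₂₁·P + Λ₂₂·Q). -/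

import Mathlib

open Polynomial

/-- The Wronskian W(P,Q) = P'·Q − P·Q'. -/
noncomputable def Wr (P Q : Polynomial ℂ) : Polynomial ℂ :=
  P.derivative * Q - P * Q.derivative

/-- The minimizer u_{P,Q}(z) = √(2/(πβ)) · conj(W(P,Q)(z)) / (|P(z)|² + |Q(z)|²). -/
noncomputable def uPQ (β : ℝ) (P Q : Polynomial ℂ) (z : ℂ) : ℂ :=
  ((Real.sqrt (2 / (Real.pi * β)) : ℝ) : ℂ) *
    (starRingEnd ℂ) ((Wr P Q).eval z) /
    (((‖P.eval z‖ ^ 2 + ‖Q.eval z‖ ^ 2 : ℝ)) : ℂ)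


noncomputable section

/-- conjugate-coefficient polynomial -/
def pstar (P : Polynomial ℂ) : Polynomial ℂ := P.map (starRingEnd ℂ)

lemma pstar_eval (P : Polynomial ℂ) (z : ℂ) :
    (pstar P).eval ((starRingEnd ℂ) z) = (starRingEnd ℂ) (P.eval z) := by
  rw [pstar, eval_map, eval₂_at_apply]

lemma pstar_pstar (P : Polynomial ℂ) : pstar (pstar P) = P := by
  rw [pstar, pstar, map_map]
  have : (starRingEnd ℂ).comp (starRingEnd ℂ) = RingHom.id ℂ := by
    ext z; simp
  rw [this, map_id]

/-- evaluation of a bivariate polynomial: inner X ↦ z, outer ↦ w -/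
def bEval (z w : ℂ) : Polynomial (Polynomial ℂ) →+* ℂ :=
  eval₂RingHom (evalRingHom z) w

lemma bEval_C (z w : ℂ) (p : Polynomial ℂ) : bEval z w (C p) = p.eval z := by
  simp [bEval]

lemma bEval_X (z w : ℂ) : bEval z w (X : Polynomial (Polynomial ℂ)) = w := by
  simp [bEval]

lemma bEval_mapC (z w : ℂ) (B : Polynomial ℂ) :
    bEval z w (B.map (C : ℂ →+* Polynomial ℂ)) = B.eval w := by
  simp only [bEval, coe_eval₂RingHom, eval₂_map]
  have : (evalRingHom z).comp (C : ℂ →+* Polynomial ℂ) = RingHom.id ℂ := by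
    ext c; simp
  rw [this]; rfl

lemma poly_zero_of_real_roots (p : Polynomial ℂ) (h : ∀ r : ℝ, p.eval (r : ℂ) = 0) :
    p = 0 := by
  apply p.eq_zero_of_infinite_isRoot
  exact Set.infinite_of_injective_forall_mem Complex.ofReal_injective h

lemma bivar_zero_of_real (G : Polynomial (Polynomial ℂ))
    (h : ∀ x y : ℝ, bEval x y G = 0) : G = 0 := by
  have h1 : ∀ x : ℝ, G.map (evalRingHom (x:ℂ)) = 0 := by
    intro x
    apply poly_zero_of_real_roots
    intro y
    rw [eval_map]
    exact h x y
  have h2 : ∀ k, G.coeff k = 0 := by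
    intro k
    apply poly_zero_of_real_roots
    intro x
    have := congrArg (fun q => Polynomial.coeff q k) (h1 x)
    simpa [coeff_map] using this
  ext k
  simp [h2]

/-- substitution: inner X ↦ a, outer X ↦ b -/
def subst (a b : Polynomial (Polynomial ℂ)) :
    Polynomial (Polynomial ℂ) →+* Polynomial (Polynomial ℂ) :=
  eval₂RingHom (eval₂RingHom (C.comp C) a) b

lemma subst_CC (a b : Polynomial (Polynomial ℂ)) (c : ℂ) :
    subst a b (C (C c)) = C (C c) := by simp [subst]

lemma subst_CX (a b : Polynomial (Polynomial ℂ)) : subst a b (C X) = a := by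
  simp [subst]

lemma subst_X (a b : Polynomial (Polynomial ℂ)) : subst a b X = b := by
  simp [subst]

/-- ring homs out of ℂ[X][Y] agree if they agree on constants and both variables -/
lemma bihom_ext {S : Type*} [CommSemiring S] (f g : Polynomial (Polynomial ℂ) →+* S)
    (hc : ∀ c : ℂ, f (C (C c)) = g (C (C c)))
    (hx : f (C X) = g (C X)) (hy : f X = g X) : f = g := by
  apply Polynomial.ringHom_ext' _ hy
  apply Polynomial.ringHom_ext' _ hx
  ext c
  exact hc c

lemma bEval_subst (a b : Polynomial (Polynomial ℂ)) (x y : ℂ)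
    (F : Polynomial (Polynomial ℂ)) :
    bEval x y (subst a b F) = bEval (bEval x y a) (bEval x y b) F := by
  have : (bEval x y).comp (subst a b) = bEval (bEval x y a) (bEval x y b) := by
    apply bihom_ext
    · intro c; simp [subst_CC, bEval_C]
    · simp [subst_CX, bEval_C]
    · simp [subst_X, bEval_X]
  exact congrArg (fun h => h F) this

lemma subst_subst (a b a' b' F : Polynomial (Polynomial ℂ)) :
    subst a' b' (subst a b F) = subst (subst a' b' a) (subst a' b' b) F := by
  have : (subst a' b').comp (subst a b) = subst (subst a' b' a) (subst a' b' b) := by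
    apply bihom_ext
    · intro c; simp [subst_CC]
    · simp [subst_CX]
    · simp [subst_X]
  exact congrArg (fun h => h F) this

lemma subst_id (F : Polynomial (Polynomial ℂ)) : subst (C X) X F = F := by
  have : subst (C X) X = RingHom.id _ := by
    apply bihom_ext <;> simp [subst_CC, subst_CX, subst_X]
  rw [this]; rfl

/-- antidiagonal vanishing: if F(z, conj z) = 0 for all z then F = 0 -/
lemma bivar_zero_of_antidiag (F : Polynomial (Polynomial ℂ))
    (h : ∀ z : ℂ, bEval z ((starRingEnd ℂ) z) F = 0) : F = 0 := by
  set i : ℂ := Complex.I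
  set a : Polynomial (Polynomial ℂ) := C X + C (C i) * X with ha
  set b : Polynomial (Polynomial ℂ) := C X - C (C i) * X with hb
  set a' : Polynomial (Polynomial ℂ) := C (C (1/2 : ℂ)) * (C X + X) with ha'
  set b' : Polynomial (Polynomial ℂ) := C (C (-i/2)) * (C X - X) with hb'
  have hG : subst a b F = 0 := by
    apply bivar_zero_of_real
    intro x y
    rw [bEval_subst]
    have h1 : bEval x y a = (x : ℂ) + i * y := by
      simp [ha, bEval_C, bEval_X, map_add, map_mul]
    have h2 : bEval x y b = (x : ℂ) - i * y := by
      simp [hb, bEval_C, bEval_X, map_sub, map_mul]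
    rw [h1, h2]
    have : ((x : ℂ) - i * y) = (starRingEnd ℂ) ((x : ℂ) + i * y) := by
      simp [i, Complex.conj_ofReal]; ring
    rw [this]
    exact h _
  have hcc : (C (C i) : Polynomial (Polynomial ℂ)) * C (C (-i/2)) = C (C (1/2 : ℂ)) := by
    rw [← map_mul, ← map_mul, show i * (-i/2) = (1/2:ℂ) from by
      simp only [i]; linear_combination (-1/2:ℂ) * Complex.I_sq]
  have h2 : (C (C (1/2:ℂ)) : Polynomial (Polynomial ℂ)) + C (C (1/2:ℂ)) = 1 := by
    rw [← map_add, ← map_add]; norm_num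
  have hida : subst a' b' a = C X := by
    simp only [ha, map_add, map_mul, subst_CC, subst_CX, subst_X, ha', hb']
    linear_combination (C X - X : Polynomial (Polynomial ℂ)) * hcc + (C X : Polynomial (Polynomial ℂ)) * h2
  have hidb : subst a' b' b = X := by
    simp only [hb, map_sub, map_mul, subst_CC, subst_CX, subst_X, ha', hb']
    linear_combination (X - C X : Polynomial (Polynomial ℂ)) * hcc + (X : Polynomial (Polynomial ℂ)) * h2
  have := congrArg (subst a' b') hG
  rw [subst_subst, hida, hidb, subst_id, map_zero] at this
  exact this

lemma Wr_comb (P Q : Polynomial ℂ) (a b c d : ℂ) :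
    Wr (C a * P + C b * Q) (C c * P + C d * Q) = C (a*d - b*c) * Wr P Q := by
  simp only [Wr, derivative_add, derivative_mul, derivative_C, zero_mul, zero_add, map_sub,
    map_mul]
  ring

/-- the kernel K(z,w) = P(z)P*(w) + Q(z)Q*(w) -/
def ker (P Q : Polynomial ℂ) : Polynomial (Polynomial ℂ) :=
  C P * (pstar P).map C + C Q * (pstar Q).map C

lemma bEval_ker (P Q : Polynomial ℂ) (z : ℂ) :
    bEval z ((starRingEnd ℂ) z) (ker P Q)
      = P.eval z * (starRingEnd ℂ) (P.eval z) + Q.eval z * (starRingEnd ℂ) (Q.eval z) := by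
  simp only [ker, map_add, map_mul, bEval_C, bEval_mapC, pstar_eval]

lemma indep_of_coprime {P Q : Polynomial ℂ} (hP : P ≠ 0) (hQ : Q ≠ 0)
    (hco : IsCoprime P Q) (hdeg : max P.natDegree Q.natDegree ≠ 0) :
    ∀ s t : ℂ, C s * P + C t * Q = 0 → s = 0 ∧ t = 0 := by
  intro s t hst
  by_cases hs : s = 0
  · subst hs
    simp only [map_zero, zero_mul, zero_add] at hst
    rcases mul_eq_zero.mp hst with h | h
    · exact ⟨rfl, by simpa using h⟩
    · exact absurd h hQ
  · exfalso
    have hPeq : P = C (s⁻¹ * (-t)) * Q := by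
      have : C s * P = C (-t) * Q := by
        rw [map_neg, neg_mul]; linear_combination hst
      calc P = C s⁻¹ * (C s * P) := by
              rw [← mul_assoc, ← map_mul, inv_mul_cancel₀ hs, map_one, one_mul]
        _ = C s⁻¹ * (C (-t) * Q) := by rw [this]
        _ = C (s⁻¹ * (-t)) * Q := by rw [map_mul, mul_assoc]
    have hdvd : Q ∣ P := ⟨C (s⁻¹ * (-t)), by rw [hPeq, mul_comm]⟩
    have hu : IsUnit Q := hco.isUnit_of_dvd' hdvd dvd_rfl
    obtain ⟨r, hr, hCr⟩ := Polynomial.isUnit_iff.mp hu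
    have hQd : Q.natDegree = 0 := by rw [← hCr, natDegree_C]
    have hPd : P.natDegree = 0 := by
      rw [hPeq]
      have := natDegree_mul (p := C (s⁻¹ * (-t))) (q := Q)
      by_cases hc : C (s⁻¹ * (-t)) = (0 : Polynomial ℂ)
      · rw [hc, zero_mul, natDegree_zero]
      · rw [natDegree_mul hc hQ, natDegree_C, hQd]
    rw [hPd, hQd] at hdeg
    simp at hdeg

lemma not_both_eval_zero {P Q : Polynomial ℂ} (hco : IsCoprime P Q) (z : ℂ) :
    ¬ (P.eval z = 0 ∧ Q.eval z = 0) := by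
  rintro ⟨h1, h2⟩
  obtain ⟨u, v, huv⟩ := hco
  have := congrArg (Polynomial.eval z) huv
  simp [h1, h2] at this

lemma habs_pos {P Q : Polynomial ℂ} (hco : IsCoprime P Q) (z : ℂ) :
    0 < ‖P.eval z‖ ^ 2 + ‖Q.eval z‖ ^ 2 := by
  rcases not_and_or.mp (not_both_eval_zero hco z) with h | h
  · have h1 : 0 < ‖P.eval z‖ := norm_pos_iff.mpr h
    nlinarith [sq_nonneg (‖Q.eval z‖)]
  · have h1 : 0 < ‖Q.eval z‖ := norm_pos_iff.mpr h
    nlinarith [sq_nonneg (‖P.eval z‖)]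

lemma indep_star {P Q : Polynomial ℂ} (hind : ∀ s t : ℂ, C s * P + C t * Q = 0 → s = 0 ∧ t = 0) :
    ∀ s t : ℂ, C s * pstar P + C t * pstar Q = 0 → s = 0 ∧ t = 0 := by
  intro s t hst
  have := congrArg (Polynomial.map (starRingEnd ℂ)) hst
  simp only [Polynomial.map_add, Polynomial.map_mul, map_C, Polynomial.map_zero] at this
  rw [show (Polynomial.map (starRingEnd ℂ) (pstar P)) = P from pstar_pstar P,
      show (Polynomial.map (starRingEnd ℂ) (pstar Q)) = Q from pstar_pstar Q] at this
  obtain ⟨h1, h2⟩ := hind _ _ this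
  exact ⟨by simpa using congrArg (starRingEnd ℂ) h1, by simpa using congrArg (starRingEnd ℂ) h2⟩

lemma not_dvd_ker {P Q : Polynomial ℂ} (hco : IsCoprime P Q)
    (hind : ∀ s t : ℂ, C s * P + C t * Q = 0 → s = 0 ∧ t = 0) (z₀ : ℂ) :
    ¬ (C (X - C z₀) : Polynomial (Polynomial ℂ)) ∣ ker P Q := by
  intro hdvd
  have hmap := map_dvd (Polynomial.mapRingHom (evalRingHom z₀)) hdvd
  have h1 : (Polynomial.mapRingHom (evalRingHom z₀)) (C (X - C z₀)) = 0 := by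
    simp [coe_mapRingHom]
  have h2 : (Polynomial.mapRingHom (evalRingHom z₀)) (ker P Q)
      = C (P.eval z₀) * pstar P + C (Q.eval z₀) * pstar Q := by
    simp only [ker, coe_mapRingHom, Polynomial.map_add, Polynomial.map_mul, map_C, map_map]
    have : (evalRingHom z₀).comp (C : ℂ →+* Polynomial ℂ) = RingHom.id ℂ := by
      ext c; simp
    rw [this, Polynomial.map_id, Polynomial.map_id]
    rfl
  rw [h1, h2] at hmap
  have hzero := zero_dvd_iff.mp hmap
  obtain ⟨e1, e2⟩ := indep_star hind _ _ hzero
  exact not_both_eval_zero hco z₀ ⟨e1, e2⟩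

lemma C_dvd_C {A B : Polynomial ℂ} (h : (C A : Polynomial (Polynomial ℂ)) ∣ C B) : A ∣ B := by
  obtain ⟨g, hg⟩ := h
  exact ⟨g.coeff 0, by simpa [mul_coeff_zero] using congrArg (fun p => Polynomial.coeff p 0) hg⟩

lemma dvd_of_ker_eq {P Q Pt Qt : Polynomial ℂ} {W Wt : Polynomial ℂ}
    (hW : W ≠ 0) (hWt : Wt ≠ 0)
    (hcoP : IsCoprime P Q)
    (hindP : ∀ s t : ℂ, C s * P + C t * Q = 0 → s = 0 ∧ t = 0)
    (hid : (C W : Polynomial (Polynomial ℂ)) * ker Pt Qt = C Wt * ker P Q) :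
    W ∣ Wt := by
  have key : ∀ z₀ : ℂ, rootMultiplicity z₀ W ≤ rootMultiplicity z₀ Wt := by
    intro z₀
    set m := rootMultiplicity z₀ W
    have h1 : (X - C z₀) ^ m ∣ W := Polynomial.pow_rootMultiplicity_dvd W z₀
    have h2 : ((C (X - C z₀) : Polynomial (Polynomial ℂ))) ^ m ∣ C Wt * ker P Q := by
      rw [← hid, ← map_pow]
      exact Dvd.dvd.mul_right ((C : Polynomial ℂ →+* _).map_dvd h1) _
    have hprime : Prime (C (X - C z₀) : Polynomial (Polynomial ℂ)) :=
      Polynomial.prime_C_iff.mpr (Polynomial.prime_X_sub_C z₀)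
    have h3 : ((C (X - C z₀) : Polynomial (Polynomial ℂ))) ^ m ∣ C Wt :=
      hprime.pow_dvd_of_dvd_mul_right m (not_dvd_ker hcoP hindP z₀) h2
    have h4 : (X - C z₀) ^ m ∣ Wt := by
      rw [← map_pow] at h3
      exact C_dvd_C h3
    exact (Polynomial.le_rootMultiplicity_iff hWt).mpr h4
  have hsplits : W.Splits := IsAlgClosed.splits W
  apply hsplits.dvd_of_roots_le_roots hW
  rw [Multiset.le_iff_count]
  intro z
  rw [count_roots, count_roots]
  exact key z

lemma Wr_ne_zero {P Q : Polynomial ℂ} (hP : P ≠ 0) (hQ : Q ≠ 0)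
    (hco : IsCoprime P Q) (hdeg : max P.natDegree Q.natDegree ≠ 0) :
    Wr P Q ≠ 0 := by
  intro h0
  have heq : P.derivative * Q = P * Q.derivative := by
    have := sub_eq_zero.mp h0
    exact this
  have hPder : P.derivative = 0 := by
    by_contra hP'
    have hdvd : P ∣ P.derivative * Q := ⟨Q.derivative, heq⟩
    have hdvd2 : P ∣ P.derivative := hco.dvd_of_dvd_mul_right hdvd
    have hdP : P.natDegree ≠ 0 := by
      intro h
      obtain ⟨c, rfl⟩ := Polynomial.natDegree_eq_zero.mp h
      simp at hP'
    have h1 : P.natDegree ≤ P.derivative.natDegree := Polynomial.natDegree_le_of_dvd hdvd2 hP'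
    have h2 : P.derivative.natDegree < P.natDegree := Polynomial.natDegree_derivative_lt hdP
    omega
  have hQder : Q.derivative = 0 := by
    rw [hPder, zero_mul] at heq
    rcases mul_eq_zero.mp heq.symm with h | h
    · exact absurd h hP
    · exact h
  have h1 : P.natDegree = 0 := Polynomial.natDegree_eq_zero_of_derivative_eq_zero hPder
  have h2 : Q.natDegree = 0 := Polynomial.natDegree_eq_zero_of_derivative_eq_zero hQder
  rw [h1, h2] at hdeg
  simp at hdeg

lemma tensor_zero {P Q : Polynomial ℂ}
    (hind : ∀ s t : ℂ, C s * P + C t * Q = 0 → s = 0 ∧ t = 0)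
    {A B : Polynomial ℂ}
    (h : (C P : Polynomial (Polynomial ℂ)) * A.map C + C Q * B.map C = 0) :
    A = 0 ∧ B = 0 := by
  have hco : ∀ j : ℕ, A.coeff j = 0 ∧ B.coeff j = 0 := by
    intro j
    have := congrArg (fun F => Polynomial.coeff F j) h
    simp only [coeff_add, coeff_C_mul, coeff_map, coeff_zero] at this
    have h2 : C (A.coeff j) * P + C (B.coeff j) * Q = 0 := by
      rw [mul_comm (C (A.coeff j)) P, mul_comm (C (B.coeff j)) Q]
      exact this
    exact hind _ _ h2
  constructor <;> (ext j; simp [(hco j).1, (hco j).2])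

lemma exists_det {Pt Qt : Polynomial ℂ} (hQt : Qt ≠ 0)
    (hind : ∀ s t : ℂ, C s * Pt + C t * Qt = 0 → s = 0 ∧ t = 0) :
    ∃ j k : ℕ, Pt.coeff j * Qt.coeff k - Pt.coeff k * Qt.coeff j ≠ 0 := by
  by_contra hall
  push_neg at hall
  obtain ⟨k, hk⟩ : ∃ k, Qt.coeff k ≠ 0 := by
    by_contra hq
    push_neg at hq
    exact hQt (by ext j; simp [hq j])
  have hrel : C (Qt.coeff k) * Pt + C (-(Pt.coeff k)) * Qt = 0 := by
    ext j
    simp only [coeff_add, coeff_C_mul, coeff_zero]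
    have := hall j k
    have h2 : Pt.coeff j * Qt.coeff k - Pt.coeff k * Qt.coeff j = 0 := by
      rw [sub_eq_zero]; exact sub_eq_zero.mp (by linear_combination this)
    linear_combination h2
  exact hk ((hind _ _ hrel).1)

lemma ker_coeff (P Q : Polynomial ℂ) (j : ℕ) :
    (ker P Q).coeff j
      = P * C ((starRingEnd ℂ) (P.coeff j)) + Q * C ((starRingEnd ℂ) (Q.coeff j)) := by
  simp only [ker, coeff_add, coeff_C_mul, coeff_map, pstar]

lemma pstar_comb (P Q : Polynomial ℂ) (a b : ℂ) :
    pstar (C a * P + C b * Q)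
      = C ((starRingEnd ℂ) a) * pstar P + C ((starRingEnd ℂ) b) * pstar Q := by
  simp [pstar, Polynomial.map_add, Polynomial.map_mul, map_C]

lemma span_of_ker {P Q Pt Qt : Polynomial ℂ} {μ : ℂ} (hQt : Qt ≠ 0)
    (hindt : ∀ s t : ℂ, C s * Pt + C t * Qt = 0 → s = 0 ∧ t = 0)
    (hker : ker Pt Qt = (C (C μ) : Polynomial (Polynomial ℂ)) * ker P Q) :
    ∃ a b c d : ℂ, Pt = C a * P + C b * Q ∧ Qt = C c * P + C d * Q := by
  obtain ⟨j, k, hdet⟩ := exists_det hQt hindt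
  set cj := (starRingEnd ℂ) (Pt.coeff j) with hcj
  set ck := (starRingEnd ℂ) (Pt.coeff k) with hck
  set dj := (starRingEnd ℂ) (Qt.coeff j) with hdj
  set dk := (starRingEnd ℂ) (Qt.coeff k) with hdk
  set pj := (starRingEnd ℂ) (P.coeff j) with hpj
  set pk := (starRingEnd ℂ) (P.coeff k) with hpk
  set qj := (starRingEnd ℂ) (Q.coeff j) with hqj
  set qk := (starRingEnd ℂ) (Q.coeff k) with hqk
  have eqj : Pt * C cj + Qt * C dj = C μ * (P * C pj + Q * C qj) := by
    have := congrArg (fun F => Polynomial.coeff F j) hker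
    simpa only [ker_coeff, coeff_C_mul] using this
  have eqk : Pt * C ck + Qt * C dk = C μ * (P * C pk + Q * C qk) := by
    have := congrArg (fun F => Polynomial.coeff F k) hker
    simpa only [ker_coeff, coeff_C_mul] using this
  set δ := cj * dk - ck * dj with hδdef
  have hδ : δ ≠ 0 := by
    intro h0
    apply hdet
    have h1 : (starRingEnd ℂ) (Pt.coeff j * Qt.coeff k - Pt.coeff k * Qt.coeff j) = 0 := by
      rw [map_sub, map_mul, map_mul]; exact h0
    simpa using congrArg (starRingEnd ℂ) h1
  refine ⟨μ * (dk * pj - dj * pk) / δ, μ * (dk * qj - dj * qk) / δ,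
          μ * (cj * pk - ck * pj) / δ, μ * (cj * qk - ck * qj) / δ, ?_, ?_⟩
  · have key : C δ * Pt = C (μ * (dk * pj - dj * pk)) * P + C (μ * (dk * qj - dj * qk)) * Q := by
      simp only [hδdef, map_sub, map_mul]
      linear_combination C dk * eqj - C dj * eqk
    have := congrArg (fun p => C δ⁻¹ * p) key
    rw [← mul_assoc, ← map_mul, inv_mul_cancel₀ hδ, map_one, one_mul] at this
    rw [this, div_eq_mul_inv, div_eq_mul_inv, mul_comm (μ * (dk * pj - dj * pk)) δ⁻¹,
      mul_comm (μ * (dk * qj - dj * qk)) δ⁻¹, map_mul, map_mul]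
    simp only [map_sub, map_mul]
    ring
  · have key : C δ * Qt = C (μ * (cj * pk - ck * pj)) * P + C (μ * (cj * qk - ck * qj)) * Q := by
      simp only [hδdef, map_sub, map_mul]
      linear_combination C cj * eqk - C ck * eqj
    have := congrArg (fun p => C δ⁻¹ * p) key
    rw [← mul_assoc, ← map_mul, inv_mul_cancel₀ hδ, map_one, one_mul] at this
    rw [this, div_eq_mul_inv, div_eq_mul_inv, mul_comm (μ * (cj * pk - ck * pj)) δ⁻¹,
      mul_comm (μ * (cj * qk - ck * qj)) δ⁻¹, map_mul, map_mul]
    simp only [map_sub, map_mul]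
    ring

lemma unitary_eqs {P Q : Polynomial ℂ}
    (hind : ∀ s t : ℂ, C s * P + C t * Q = 0 → s = 0 ∧ t = 0) {a b c d μ : ℂ}
    (hker : ker (C a * P + C b * Q) (C c * P + C d * Q)
      = (C (C μ) : Polynomial (Polynomial ℂ)) * ker P Q) :
    a * (starRingEnd ℂ) a + c * (starRingEnd ℂ) c = μ ∧
    a * (starRingEnd ℂ) b + c * (starRingEnd ℂ) d = 0 ∧
    b * (starRingEnd ℂ) a + d * (starRingEnd ℂ) c = 0 ∧
    b * (starRingEnd ℂ) b + d * (starRingEnd ℂ) d = μ := by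
  set A : Polynomial ℂ :=
    C (a * (starRingEnd ℂ) a + c * (starRingEnd ℂ) c - μ) * pstar P
      + C (a * (starRingEnd ℂ) b + c * (starRingEnd ℂ) d) * pstar Q with hA
  set B : Polynomial ℂ :=
    C (b * (starRingEnd ℂ) a + d * (starRingEnd ℂ) c) * pstar P
      + C (b * (starRingEnd ℂ) b + d * (starRingEnd ℂ) d - μ) * pstar Q with hB
  have hAB : (C P : Polynomial (Polynomial ℂ)) * A.map C + C Q * B.map C = 0 := by
    rw [← sub_eq_zero.mpr hker]
    simp only [hA, hB, ker, pstar_comb, map_add, map_sub, map_mul, Polynomial.map_add,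
      Polynomial.map_sub, Polynomial.map_mul, Polynomial.map_neg, map_C]
    ring
  obtain ⟨hA0, hB0⟩ := tensor_zero hind hAB
  obtain ⟨e1, e2⟩ := indep_star hind _ _ hA0
  obtain ⟨e3, e4⟩ := indep_star hind _ _ hB0
  exact ⟨by linear_combination e1, by linear_combination e2,
         by linear_combination e3, by linear_combination e4⟩

lemma habs_eq (x y : ℂ) :
    ((‖x‖ ^ 2 + ‖y‖ ^ 2 : ℝ) : ℂ)
      = x * (starRingEnd ℂ) x + y * (starRingEnd ℂ) y := by
  rw [Complex.mul_conj, Complex.mul_conj, Complex.normSq_eq_norm_sq, Complex.normSq_eq_norm_sq]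
  push_cast; ring


end

/-- for β = 2n and two pairs of nonzero coprime polynomials of maximal
degree n, u_{P,Q} = u_{P̃,Q̃} iff (P̃,Q̃) = c·Λ(P,Q) for some c > 0 and Λ ∈ SU(2). -/
theorem stmt7 (n : ℕ) (hn : 0 < n) (β : ℝ) (hβ : β = 2 * n)
    (P Q Pt Qt : Polynomial ℂ)
    (hP : P ≠ 0) (hQ : Q ≠ 0) (hco : IsCoprime P Q)
    (hdeg : max P.natDegree Q.natDegree = n)
    (hPt : Pt ≠ 0) (hQt : Qt ≠ 0) (hcot : IsCoprime Pt Qt)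
    (hdegt : max Pt.natDegree Qt.natDegree = n) :
    (∀ z : ℂ, uPQ β P Q z = uPQ β Pt Qt z) ↔
    ∃ c : ℝ, 0 < c ∧ ∃ Λ : Matrix (Fin 2) (Fin 2) ℂ,
      Λ ∈ Matrix.unitaryGroup (Fin 2) ℂ ∧ Λ.det = 1 ∧
      Pt = Polynomial.C ((c : ℂ) * Λ 0 0) * P + Polynomial.C ((c : ℂ) * Λ 0 1) * Q ∧
      Qt = Polynomial.C ((c : ℂ) * Λ 1 0) * P + Polynomial.C ((c : ℂ) * Λ 1 1) * Q := by
  simp only [uPQ]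
  have hndeg : max P.natDegree Q.natDegree ≠ 0 := by omega
  have hndegt : max Pt.natDegree Qt.natDegree ≠ 0 := by omega
  have hind := indep_of_coprime hP hQ hco hndeg
  have hindt := indep_of_coprime hPt hQt hcot hndegt
  have hW : Wr P Q ≠ 0 := Wr_ne_zero hP hQ hco hndeg
  have hWt : Wr Pt Qt ≠ 0 := Wr_ne_zero hPt hQt hcot hndegt
  have hs₀ : (0:ℝ) < Real.sqrt (2 / (Real.pi * β)) := by
    apply Real.sqrt_pos.mpr
    apply div_pos two_pos
    apply mul_pos Real.pi_pos
    rw [hβ]; positivity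
  set s₀ := Real.sqrt (2 / (Real.pi * β)) with hs₀def
  constructor
  · -- forward
    intro hu
    have hs₀ne : ((s₀:ℝ):ℂ) ≠ 0 := by
      simp only [ne_eq, Complex.ofReal_eq_zero]; exact hs₀.ne'
    have hpt : ∀ z : ℂ, (Wr P Q).eval z *
        ((‖Pt.eval z‖ ^ 2 + ‖Qt.eval z‖ ^ 2 : ℝ) : ℂ)
        = (Wr Pt Qt).eval z *
        ((‖P.eval z‖ ^ 2 + ‖Q.eval z‖ ^ 2 : ℝ) : ℂ) := by
      intro z
      have h1 := hu z
      have hden1 : ((‖P.eval z‖ ^ 2 + ‖Q.eval z‖ ^ 2 : ℝ) : ℂ) ≠ 0 := by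
        simp only [ne_eq, Complex.ofReal_eq_zero]; exact (habs_pos hco z).ne'
      have hden2 : ((‖Pt.eval z‖ ^ 2 + ‖Qt.eval z‖ ^ 2 : ℝ) : ℂ) ≠ 0 := by
        simp only [ne_eq, Complex.ofReal_eq_zero]; exact (habs_pos hcot z).ne'
      rw [div_eq_div_iff hden1 hden2] at h1
      rw [mul_assoc, mul_assoc] at h1
      have h2 := mul_left_cancel₀ hs₀ne h1
      have h3 := congrArg (starRingEnd ℂ) h2
      simpa only [map_mul, Complex.conj_ofReal, RingHomCompTriple.comp_apply,
        Complex.conj_conj, RingHom.id_apply] using h3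
    have hbig : (C (Wr P Q) : Polynomial (Polynomial ℂ)) * ker Pt Qt
        = C (Wr Pt Qt) * ker P Q := by
      rw [← sub_eq_zero]
      apply bivar_zero_of_antidiag
      intro z
      simp only [map_sub, map_mul, bEval_C, bEval_ker]
      rw [← habs_eq, ← habs_eq, sub_eq_zero]
      exact hpt z
    have d1 : Wr P Q ∣ Wr Pt Qt := dvd_of_ker_eq hW hWt hco hind hbig
    have d2 : Wr Pt Qt ∣ Wr P Q := dvd_of_ker_eq hWt hW hcot hindt hbig.symm
    obtain ⟨u, hu'⟩ := associated_of_dvd_dvd d1 d2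
    obtain ⟨r, hru, hCr⟩ := Polynomial.isUnit_iff.mp u.isUnit
    have hμ : Wr Pt Qt = C r * Wr P Q := by rw [← hu', ← hCr]; ring
    have hrne : r ≠ 0 := hru.ne_zero
    have hkerId : ker Pt Qt = (C (C r) : Polynomial (Polynomial ℂ)) * ker P Q := by
      apply mul_left_cancel₀ (show (C (Wr P Q) : Polynomial (Polynomial ℂ)) ≠ 0 from by
        simpa using hW)
      rw [hbig, hμ, map_mul]
      ring
    obtain ⟨a, b, c₂, d₂, hPtEq, hQtEq⟩ := span_of_ker hQt hindt hkerId
    rw [hPtEq, hQtEq] at hkerId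
    obtain ⟨e1, e2, e3, e4⟩ := unitary_eqs hind hkerId
    have hrreal : r = ((Complex.normSq a + Complex.normSq c₂ : ℝ) : ℂ) := by
      rw [← e1]
      push_cast
      rw [Complex.mul_conj, Complex.mul_conj]
    set μr := Complex.normSq a + Complex.normSq c₂ with hμrdef
    have hμrpos : 0 < μr := by
      have h0 : 0 ≤ μr := add_nonneg (Complex.normSq_nonneg a) (Complex.normSq_nonneg c₂)
      rcases h0.lt_or_eq with h | h
      · exact h
      · exfalso; apply hrne; rw [hrreal, ← h]; simp
    set c₀ := Real.sqrt μr with hc₀def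
    have hc₀pos : 0 < c₀ := Real.sqrt_pos.mpr hμrpos
    have hc₀sq : c₀ ^ 2 = μr := Real.sq_sqrt hμrpos.le
    have hc₀C : ((c₀:ℝ):ℂ) ^ 2 = r := by
      rw [hrreal, ← Complex.ofReal_pow, hc₀sq]
    have hc₀ne : ((c₀:ℝ):ℂ) ≠ 0 := by
      simp only [ne_eq, Complex.ofReal_eq_zero]; exact hc₀pos.ne'
    have hdetEq : a * d₂ - b * c₂ = r := by
      have h1 : Wr Pt Qt = C (a * d₂ - b * c₂) * Wr P Q := by
        rw [hPtEq, hQtEq]; exact Wr_comb P Q a b c₂ d₂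
      have h2 : C (a * d₂ - b * c₂) * Wr P Q = C r * Wr P Q := h1.symm.trans hμ
      exact Polynomial.C_injective (mul_right_cancel₀ hW h2)
    refine ⟨c₀, hc₀pos, !![a/(c₀:ℂ), b/(c₀:ℂ); c₂/(c₀:ℂ), d₂/(c₀:ℂ)], ?_, ?_, ?_, ?_⟩
    · rw [Matrix.mem_unitaryGroup_iff']
      ext i j
      fin_cases i <;> fin_cases j <;>
        simp only [Matrix.mul_apply, Fin.sum_univ_two, Matrix.star_apply, Matrix.one_apply,
          Matrix.cons_val', Matrix.cons_val_zero, Matrix.cons_val_one, Matrix.head_cons,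
          Matrix.head_fin_const, Matrix.empty_val', Matrix.cons_val_fin_one, Fin.zero_eta,
          Fin.mk_one, RCLike.star_def, map_div₀, Complex.conj_ofReal, Fin.isValue,
          Matrix.of_apply]
      · simp only [if_true]
        field_simp
        linear_combination e1 - hc₀C
      · rw [if_neg (by decide)]
        rw [div_mul_div_comm, div_mul_div_comm, ← add_div, _root_.div_eq_zero_iff]
        left
        linear_combination e3
      · rw [if_neg (by decide)]
        rw [div_mul_div_comm, div_mul_div_comm, ← add_div, _root_.div_eq_zero_iff]
        left
        linear_combination e2
      · simp only [if_true]
        field_simp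
        linear_combination e4 - hc₀C
    · rw [Matrix.det_fin_two_of]
      field_simp
      linear_combination hdetEq - hc₀C
    · rw [hPtEq]
      congr 2 <;>
      · simp only [Matrix.cons_val', Matrix.cons_val_zero, Matrix.cons_val_one,
          Matrix.head_cons, Matrix.empty_val', Matrix.cons_val_fin_one, Matrix.of_apply,
          Fin.isValue]
        field_simp
    · rw [hQtEq]
      congr 2 <;>
      · simp only [Matrix.cons_val', Matrix.cons_val_zero, Matrix.cons_val_one,
          Matrix.head_cons, Matrix.empty_val', Matrix.cons_val_fin_one, Matrix.of_apply,
          Fin.isValue]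
        field_simp
  · -- backward
    rintro ⟨c, hc, Λ, hΛmem, hΛdet, hPtEq, hQtEq⟩
    have hstar : star Λ * Λ = 1 := (Matrix.mem_unitaryGroup_iff').mp hΛmem
    have entry : ∀ i j : Fin 2,
        (starRingEnd ℂ) (Λ 0 i) * Λ 0 j + (starRingEnd ℂ) (Λ 1 i) * Λ 1 j
          = if i = j then 1 else 0 := by
      intro i j
      have := congrFun (congrFun hstar i) j
      simpa [Matrix.mul_apply, Fin.sum_univ_two, Matrix.star_apply, Matrix.one_apply,
        RCLike.star_def] using this
    set a := (c : ℂ) * Λ 0 0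
    set b := (c : ℂ) * Λ 0 1
    set c₂ := (c : ℂ) * Λ 1 0
    set d₂ := (c : ℂ) * Λ 1 1
    have hdet2 : a * d₂ - b * c₂ = ((c:ℝ)^2 : ℝ) := by
      have hd : Λ.det = Λ 0 0 * Λ 1 1 - Λ 0 1 * Λ 1 0 := Matrix.det_fin_two Λ
      rw [hΛdet] at hd
      push_cast
      simp only [a, b, c₂, d₂]
      linear_combination ((c:ℂ))^2 * hd.symm
    intro z
    have hnum : Wr Pt Qt = C (((c:ℝ)^2 : ℝ) : ℂ) * Wr P Q := by
      rw [hPtEq, hQtEq, Wr_comb, hdet2]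
    have hden : (‖Pt.eval z‖ ^ 2 + ‖Qt.eval z‖ ^ 2 : ℝ)
        = (c:ℝ)^2 * (‖P.eval z‖ ^ 2 + ‖Q.eval z‖ ^ 2) := by
      have hPz : Pt.eval z = a * P.eval z + b * Q.eval z := by
        rw [hPtEq]; simp [eval_add, eval_mul]
      have hQz : Qt.eval z = c₂ * P.eval z + d₂ * Q.eval z := by
        rw [hQtEq]; simp [eval_add, eval_mul]
      have hcconj : (starRingEnd ℂ) ((c:ℝ):ℂ) = ((c:ℝ):ℂ) := Complex.conj_ofReal c
      have e00 := entry 0 0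
      have e01 := entry 0 1
      have e10 := entry 1 0
      have e11 := entry 1 1
      norm_num at e00 e01 e10 e11
      have hC : ((‖Pt.eval z‖ ^ 2 + ‖Qt.eval z‖ ^ 2 : ℝ) : ℂ)
          = (((c:ℝ)^2 * (‖P.eval z‖ ^ 2 + ‖Q.eval z‖ ^ 2) : ℝ) : ℂ) := by
        rw [habs_eq, Complex.ofReal_mul, habs_eq, hPz, hQz]
        simp only [map_add, map_mul, hcconj, a, b, c₂, d₂]
        push_cast
        linear_combination ((c:ℂ)^2 * P.eval z * (starRingEnd ℂ) (P.eval z)) * e00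
          + ((c:ℂ)^2 * P.eval z * (starRingEnd ℂ) (Q.eval z)) * e10
          + ((c:ℂ)^2 * Q.eval z * (starRingEnd ℂ) (P.eval z)) * e01
          + ((c:ℂ)^2 * Q.eval z * (starRingEnd ℂ) (Q.eval z)) * e11
      exact_mod_cast hC
    have hc2 : (((c:ℝ)^2 : ℝ) : ℂ) ≠ 0 := by
      simp only [ne_eq, Complex.ofReal_eq_zero]
      positivity
    rw [hnum, hden]
    simp only [eval_mul, eval_C, map_mul, Complex.conj_ofReal, Complex.ofReal_mul]
    rw [mul_left_comm ((s₀:ℝ):ℂ) (((c:ℝ)^2:ℝ):ℂ)]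
    rw [mul_div_mul_left _ _ hc2]
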